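/- (Exponential decay of extracted features) If the kernel is admissible with β = min_r |γ_0(r)|² > 0 and B = max_r |γ_0(r)|², then for each m ≥ 1 and each f ∈ L²(G): Σ_{p∈{1,…,J}^m} ‖S[p]f‖² ≤ B (1−β)^m ‖f‖². -/

import Mathlib

open scoped BigOperators
open MeasureTheory

noncomputable def conv {G : Type*} [Group G] [Fintype G] (f g : G → ℂ) : G → ℂ :=
  fun x => (Fintype.card G : ℂ)⁻¹ * ∑ y, f y * g (y⁻¹ * x)

noncomputable def nsq {G : Type*} [Fintype G] (f : G → ℂ) : ℝ :=
  (Fintype.card G : ℝ)⁻¹ * ∑ x, Complex.normSq (f x)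

noncomputable def ip {G : Type*} [Fintype G] (f g : G → ℂ) : ℂ :=
  (Fintype.card G : ℂ)⁻¹ * ∑ x, f x * (starRingEnd ℂ) (g x)

noncomputable def gwavelet {G : Type*} [Group G] {k : ℕ} (d : Fin k → ℕ)
    (π : (r : Fin k) → G →* Matrix (Fin (d r)) (Fin (d r)) ℂ)
    (γ : Fin k → ℂ) : G → ℂ :=
  fun x => ∑ r, (d r : ℂ) * γ r * Matrix.trace (π r x)

noncomputable def Upath {G : Type*} [Group G] [Fintype G] {J : ℕ}
    (ψ : Fin J → G → ℂ) : List (Fin J) → (G → ℂ) → G → ℂ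
  | [], f => f
  | j :: p, f => Upath ψ p fun x => ((‖conv (ψ j) f x‖ : ℝ) : ℂ)

noncomputable def Sop {G : Type*} [Group G] [Fintype G] {k J : ℕ} (d : Fin k → ℕ)
    (π : (r : Fin k) → G →* Matrix (Fin (d r)) (Fin (d r)) ℂ)
    (γ : Fin (J + 1) → Fin k → ℂ) (p : List (Fin J)) (f : G → ℂ) : G → ℂ :=
  conv (gwavelet d π (γ 0)) (Upath (fun j => gwavelet d π (γ j.succ)) p f)

noncomputable def Pj {G : Type*} [Group G] [Fintype G] {k : ℕ} {d : Fin k → ℕ}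
    (π : (r : Fin k) → G →* Matrix (Fin (d r)) (Fin (d r)) ℂ)
    (r : Fin k) (f : G → ℂ) : G → ℂ :=
  conv (fun y => (d r : ℂ) * Matrix.trace (π r y)) f

section basic
set_option linter.unusedSectionVars false
variable {G : Type*} [Group G] [Fintype G]

lemma cardC_ne : (Fintype.card G : ℂ) ≠ 0 := by
  exact_mod_cast Fintype.card_ne_zero

lemma nsq_nonneg (g : G → ℂ) : 0 ≤ nsq g := by
  apply mul_nonneg (by positivity)
  exact Finset.sum_nonneg fun x _ => Complex.normSq_nonneg _

lemma nsq_abs (g : G → ℂ) :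
    nsq (fun x => ((‖g x‖ : ℝ) : ℂ)) = nsq g := by
  unfold nsq
  congr 1
  apply Finset.sum_congr rfl
  intro x _
  rw [Complex.normSq_ofReal, ← Complex.sq_norm, sq]

lemma ip_self (g : G → ℂ) : ip g g = ((nsq g : ℝ) : ℂ) := by
  unfold ip nsq
  push_cast
  congr 1
  apply Finset.sum_congr rfl
  intro x _
  exact (Complex.mul_conj (g x)).trans (by norm_cast)

lemma conv_assoc (g h u : G → ℂ) : conv g (conv h u) = conv (conv g h) u := by
  funext x
  set c : ℂ := (Fintype.card G : ℂ)⁻¹ with hc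
  have L : conv g (conv h u) x = ∑ y, ∑ z, c * c * (g y * h z * u (z⁻¹ * (y⁻¹ * x))) := by
    unfold conv
    simp only [Finset.mul_sum, Finset.sum_mul, ← hc]
    exact Finset.sum_congr rfl fun y _ => Finset.sum_congr rfl fun z _ => by ring
  have R : conv (conv g h) u x = ∑ y, ∑ w, c * c * (g y * h (y⁻¹ * w) * u (w⁻¹ * x)) := by
    unfold conv
    simp only [Finset.mul_sum, Finset.sum_mul, ← hc]
    rw [Finset.sum_comm]
    exact Finset.sum_congr rfl fun y _ => Finset.sum_congr rfl fun w _ => by ring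
  rw [L, R]
  refine Finset.sum_congr rfl fun y _ => ?_
  rw [← Equiv.sum_comp (Equiv.mulLeft y) (fun w => c * c * (g y * h (y⁻¹ * w) * u (w⁻¹ * x)))]
  refine Finset.sum_congr rfl fun z _ => ?_
  simp [mul_inv_rev, mul_assoc]

lemma ip_conv (g u v : G → ℂ) :
    ip (conv g u) v = ip u (conv (fun y => (starRingEnd ℂ) (g y⁻¹)) v) := by
  set c : ℂ := (Fintype.card G : ℂ)⁻¹ with hc
  have hcc : (starRingEnd ℂ) c = c := by simp [hc]
  have L : ip (conv g u) v = ∑ y, ∑ t, c * c * (g y * (u t * (starRingEnd ℂ) (v (y * t)))) := by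
    unfold ip conv
    simp only [Finset.mul_sum, Finset.sum_mul, ← hc]
    rw [Finset.sum_comm]
    refine Finset.sum_congr rfl fun y _ => ?_
    rw [← Equiv.sum_comp (Equiv.mulLeft y)
      (fun x => c * (c * (g y * u (y⁻¹ * x)) * (starRingEnd ℂ) (v x)))]
    exact Finset.sum_congr rfl fun t _ => by simp [mul_assoc]
  have R : ip u (conv (fun y => (starRingEnd ℂ) (g y⁻¹)) v)
      = ∑ y, ∑ t, c * c * (g y * (u t * (starRingEnd ℂ) (v (y * t)))) := by
    unfold ip conv
    simp only [← hc, map_mul, map_sum, hcc, Complex.conj_conj, Finset.mul_sum, Finset.sum_mul]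
    rw [Finset.sum_comm]
    rw [← Equiv.sum_comp (Equiv.inv G)
      (fun y => ∑ t, c * c * (g y * (u t * (starRingEnd ℂ) (v (y * t)))))]
    refine Finset.sum_congr rfl fun y _ => Finset.sum_congr rfl fun t _ => ?_
    simp only [Equiv.inv_apply]
    ring
  rw [L, R]
end basic


section rep
set_option linter.unusedSectionVars false
variable {G : Type*} [Group G] [Fintype G] {k : ℕ} {d : Fin k → ℕ}
  {π : (r : Fin k) → G →* Matrix (Fin (d r)) (Fin (d r)) ℂ}

lemma star_pi (hunit : ∀ r x, π r x ∈ Matrix.unitaryGroup (Fin (d r)) ℂ) (r : Fin k) (x : G) :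
    star (π r x) = π r x⁻¹ := by
  have h1 : π r x * π r x⁻¹ = 1 := by rw [← map_mul, mul_inv_cancel, map_one]
  have h2 : star (π r x) * π r x = 1 := Matrix.mem_unitaryGroup_iff'.mp (hunit r x)
  calc star (π r x) = star (π r x) * (π r x * π r x⁻¹) := by rw [h1, mul_one]
    _ = star (π r x) * π r x * π r x⁻¹ := by rw [mul_assoc]
    _ = π r x⁻¹ := by rw [h2, one_mul]

lemma conj_char (hunit : ∀ r x, π r x ∈ Matrix.unitaryGroup (Fin (d r)) ℂ) (r : Fin k) (x : G) :
    (starRingEnd ℂ) (Matrix.trace (π r x)) = Matrix.trace (π r x⁻¹) := by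
  rw [← star_pi hunit, Matrix.star_eq_conjTranspose, Matrix.trace_conjTranspose]
  rfl

lemma avg_intertwine (r s : Fin k) (A : Matrix (Fin (d r)) (Fin (d s)) ℂ) (g : G) :
    π r g * (∑ x : G, π r x * A * π s x⁻¹) = (∑ x : G, π r x * A * π s x⁻¹) * π s g := by
  rw [Matrix.mul_sum, Matrix.sum_mul]
  rw [← Equiv.sum_comp (Equiv.mulLeft g) (fun x => π r x * A * π s x⁻¹ * π s g)]
  refine Finset.sum_congr rfl fun x _ => ?_
  simp only [Equiv.coe_mulLeft]
  have h1 : π s (g * x)⁻¹ * π s g = π s x⁻¹ := by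
    rw [← map_mul]
    congr 1
    simp [mul_inv_rev, mul_assoc]
  rw [Matrix.mul_assoc (π r (g * x) * A) _ (π s g), h1]
  simp only [map_mul, Matrix.mul_assoc]

lemma schur_ne (hneq : ∀ (r s : Fin k), r ≠ s → ∀ T : Matrix (Fin (d r)) (Fin (d s)) ℂ,
      (∀ x, π r x * T = T * π s x) → T = 0)
    (r s : Fin k) (hrs : r ≠ s) (A : Matrix (Fin (d r)) (Fin (d s)) ℂ) :
    ∑ x : G, π r x * A * π s x⁻¹ = 0 :=
  hneq r s hrs _ (fun g => avg_intertwine r s A g)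

lemma schur_eq (hdpos : ∀ r, 0 < d r)
    (hirr : ∀ (r : Fin k) (M : Matrix (Fin (d r)) (Fin (d r)) ℂ),
      (∀ x, M * π r x = π r x * M) → ∃ c : ℂ, M = c • (1 : Matrix (Fin (d r)) (Fin (d r)) ℂ))
    (r : Fin k) (A : Matrix (Fin (d r)) (Fin (d r)) ℂ) :
    ∑ x : G, π r x * A * π r x⁻¹
      = ((Fintype.card G : ℂ) * Matrix.trace A / (d r : ℂ)) • 1 := by
  obtain ⟨c, hc⟩ := hirr r _ (fun g => (avg_intertwine r r A g).symm)
  have htr : Matrix.trace (∑ x : G, π r x * A * π r x⁻¹)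
      = (Fintype.card G : ℂ) * Matrix.trace A := by
    rw [Matrix.trace_sum]
    have h1 : ∀ x : G, Matrix.trace (π r x * A * π r x⁻¹) = Matrix.trace A := by
      intro x
      rw [Matrix.trace_mul_comm, ← mul_assoc, ← map_mul, inv_mul_cancel, map_one, one_mul]
    simp [h1, Finset.card_univ, nsmul_eq_mul]
  rw [hc, Matrix.trace_smul, Matrix.trace_one] at htr
  rw [hc]
  congr 1
  have hd : ((d r : ℂ)) ≠ 0 := by exact_mod_cast (hdpos r).ne'
  field_simp
  simpa [smul_eq_mul, Fintype.card_fin, mul_comm] using htr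

lemma entry_std {n m p q : Type*} [Fintype n] [Fintype m] [DecidableEq n] [DecidableEq m]
    (M : Matrix p n ℂ) (N : Matrix m q ℂ) (a : n) (b : m) (c : p) (e : q) :
    (M * Matrix.single a b (1:ℂ) * N) c e = M c a * N b e := by
  rw [Matrix.mul_apply]
  have h1 : ∀ j, (M * Matrix.single a b (1:ℂ)) c j = if j = b then M c a else 0 := by
    intro j
    rw [Matrix.mul_apply]
    simp [Matrix.single, Matrix.of_apply, mul_ite, ite_and, eq_comm, Finset.sum_ite_eq]
  simp [h1, ite_mul, Finset.sum_ite_eq]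

lemma coef_ne (hneq : ∀ (r s : Fin k), r ≠ s → ∀ T : Matrix (Fin (d r)) (Fin (d s)) ℂ,
      (∀ x, π r x * T = T * π s x) → T = 0)
    (r s : Fin k) (hrs : r ≠ s) (a : Fin (d r)) (b : Fin (d s)) (c : Fin (d r)) (e : Fin (d s)) :
    ∑ x : G, (π r x) c a * (π s x⁻¹) b e = 0 := by
  have h := schur_ne hneq r s hrs (Matrix.single a b 1)
  have h2 := congrFun (congrFun h c) e
  rw [Matrix.sum_apply] at h2
  simpa [entry_std] using h2

lemma coef_eq (hdpos : ∀ r, 0 < d r)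
    (hirr : ∀ (r : Fin k) (M : Matrix (Fin (d r)) (Fin (d r)) ℂ),
      (∀ x, M * π r x = π r x * M) → ∃ c : ℂ, M = c • (1 : Matrix (Fin (d r)) (Fin (d r)) ℂ))
    (r : Fin k) (a b c e : Fin (d r)) :
    ∑ x : G, (π r x) c a * (π r x⁻¹) b e
      = (Fintype.card G : ℂ) / (d r : ℂ)
        * ((if a = b then 1 else 0) * (if c = e then 1 else 0)) := by
  have h := schur_eq hdpos hirr r (Matrix.single a b 1)
  have h2 := congrFun (congrFun h c) e
  rw [Matrix.sum_apply] at h2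
  simp only [entry_std] at h2
  rw [h2]
  rw [Matrix.smul_apply, Matrix.one_apply]
  by_cases hab : a = b
  · subst hab
    rw [Matrix.trace_single_eq_same]
    simp [smul_eq_mul, mul_ite]
  · rw [Matrix.trace_single_eq_of_ne _ _ _ hab]
    simp [hab]

lemma char_orth (hdpos : ∀ r, 0 < d r)
    (hirr : ∀ (r : Fin k) (M : Matrix (Fin (d r)) (Fin (d r)) ℂ),
      (∀ x, M * π r x = π r x * M) → ∃ c : ℂ, M = c • (1 : Matrix (Fin (d r)) (Fin (d r)) ℂ))
    (hneq : ∀ (r s : Fin k), r ≠ s → ∀ T : Matrix (Fin (d r)) (Fin (d s)) ℂ,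
      (∀ x, π r x * T = T * π s x) → T = 0)
    (r s : Fin k) :
    ∑ x : G, Matrix.trace (π r x) * Matrix.trace (π s x⁻¹)
      = if r = s then (Fintype.card G : ℂ) else 0 := by
  have expand : ∀ (F : Fin (d r) → G → ℂ) (H : Fin (d s) → G → ℂ),
      ∑ x : G, (∑ i, F i x) * (∑ j, H j x) = ∑ i, ∑ j, ∑ x : G, F i x * H j x := by
    intro F H
    have h1 : ∀ x : G, (∑ i, F i x) * (∑ j, H j x) = ∑ i, ∑ j, F i x * H j x :=
      fun x => Finset.sum_mul_sum _ _ _ _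
    rw [Finset.sum_congr rfl fun x _ => h1 x, Finset.sum_comm]
    exact Finset.sum_congr rfl fun i _ => Finset.sum_comm
  simp only [Matrix.trace, Matrix.diag]
  rw [expand (fun i x => (π r x) i i) (fun j x => (π s x⁻¹) j j)]
  by_cases hrs : r = s
  · subst hrs
    rw [if_pos rfl]
    have h2 : ∀ i : Fin (d r), ∑ j : Fin (d r), ∑ x : G, (π r x) i i * (π r x⁻¹) j j
        = (Fintype.card G : ℂ) / (d r : ℂ) := by
      intro i
      have h3 : ∀ j, ∑ x : G, (π r x) i i * (π r x⁻¹) j j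
          = (Fintype.card G : ℂ) / (d r : ℂ)
            * ((if i = j then 1 else 0) * (if i = j then 1 else 0)) := by
        intro j; exact coef_eq hdpos hirr r i j i j
      simp [h3, mul_ite, Finset.sum_ite_eq]
    rw [Finset.sum_congr rfl fun i _ => h2 i]
    rw [Finset.sum_const, Finset.card_univ, Fintype.card_fin, nsmul_eq_mul]
    have hd : ((d r : ℂ)) ≠ 0 := by exact_mod_cast (hdpos r).ne'
    field_simp
  · rw [if_neg hrs]
    refine Finset.sum_eq_zero fun i _ => Finset.sum_eq_zero fun j _ => ?_
    exact coef_ne hneq r s hrs i j i j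

lemma complete [DecidableEq G]
    (hdpos : ∀ r, 0 < d r)
    (hirr : ∀ (r : Fin k) (M : Matrix (Fin (d r)) (Fin (d r)) ℂ),
      (∀ x, M * π r x = π r x * M) → ∃ c : ℂ, M = c • (1 : Matrix (Fin (d r)) (Fin (d r)) ℂ))
    (hneq : ∀ (r s : Fin k), r ≠ s → ∀ T : Matrix (Fin (d r)) (Fin (d s)) ℂ,
      (∀ x, π r x * T = T * π s x) → T = 0)
    (hcard : Nat.card (ConjClasses G) = k) (x : G) :
    ∑ r, (d r : ℂ) * Matrix.trace (π r x)
      = if x = 1 then (Fintype.card G : ℂ) else 0 := by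
  classical
  have hcardC : (Fintype.card G : ℂ) ≠ 0 := by exact_mod_cast Fintype.card_ne_zero
  -- class function property
  have χcl : ∀ (r : Fin k) (a b : G), IsConj a b
      → Matrix.trace (π r a) = Matrix.trace (π r b) := by
    intro r a b hab
    obtain ⟨g, hg⟩ := isConj_iff.mp hab
    rw [← hg, map_mul, map_mul, Matrix.trace_mul_comm, ← Matrix.mul_assoc, ← map_mul,
      inv_mul_cancel, map_one, Matrix.one_mul]
  -- lifted characters
  let χ' : Fin k → ConjClasses G → ℂ := fun r =>
    Quotient.lift (fun y => Matrix.trace (π r y)) (fun a b h => χcl r a b h)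
  have hχ' : ∀ (r : Fin k) (y : G), χ' r (ConjClasses.mk y) = Matrix.trace (π r y) :=
    fun r y => rfl
  -- key summation identity
  have key : ∀ (u : Fin k → ℂ) (s : Fin k),
      ∑ y : G, (∑ r, u r * Matrix.trace (π r y)) * Matrix.trace (π s y⁻¹)
        = u s * (Fintype.card G : ℂ) := by
    intro u s
    have h1 : ∀ y : G, (∑ r, u r * Matrix.trace (π r y)) * Matrix.trace (π s y⁻¹)
        = ∑ r, u r * (Matrix.trace (π r y) * Matrix.trace (π s y⁻¹)) := by
      intro y; rw [Finset.sum_mul]; exact Finset.sum_congr rfl fun r _ => by ring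
    rw [Finset.sum_congr rfl fun y _ => h1 y, Finset.sum_comm]
    have h2 : ∀ r, ∑ y : G, u r * (Matrix.trace (π r y) * Matrix.trace (π s y⁻¹))
        = u r * (if r = s then (Fintype.card G : ℂ) else 0) := fun r => by
      rw [← Finset.mul_sum, char_orth hdpos hirr hneq r s]
    rw [Finset.sum_congr rfl fun r _ => h2 r]
    simp
  -- linear independence
  have li : LinearIndependent ℂ χ' := by
    rw [Fintype.linearIndependent_iff]
    intro g hg s
    have h0 : ∀ y : G, (∑ r, g r * Matrix.trace (π r y)) = 0 := by
      intro y
      have := congrFun hg (ConjClasses.mk y)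
      simpa [Finset.sum_apply, hχ'] using this
    have := key g s
    rw [Finset.sum_congr rfl fun y (_ : y ∈ Finset.univ) => by rw [h0 y, zero_mul]] at this
    rw [Finset.sum_const, smul_zero] at this
    exact (mul_eq_zero.mp this.symm).resolve_right hcardC
  -- dimension count
  letI : Fintype (ConjClasses G) := Fintype.ofFinite _
  have hkpos : 0 < k := by
    rw [← hcard, Nat.card_eq_fintype_card]
    exact Fintype.card_pos
  haveI : Nonempty (Fin k) := ⟨⟨0, hkpos⟩⟩
  have card_eq : Fintype.card (Fin k) = Module.finrank ℂ (ConjClasses G → ℂ) := by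
    rw [Fintype.card_fin, Module.finrank_pi, ← Nat.card_eq_fintype_card, hcard]
  let bas := basisOfLinearIndependentOfCardEqFinrank li card_eq
  have hbas : ⇑bas = χ' := coe_basisOfLinearIndependentOfCardEqFinrank li card_eq
  -- delta function on classes
  let δ' : ConjClasses G → ℂ := fun cl => if cl = ConjClasses.mk 1 then 1 else 0
  have hδ' : ∀ y : G, δ' (ConjClasses.mk y) = if y = 1 then 1 else 0 := by
    intro y
    simp only [δ', ConjClasses.mk_eq_mk_iff_isConj, isConj_one_left]
  set c : Fin k → ℂ := fun r => bas.repr δ' r with hcdef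
  have hsum : ∑ r, c r • χ' r = δ' := by
    conv_rhs => rw [← Module.Basis.sum_repr bas δ']
    rw [hbas]
  have hrep : ∀ y : G, (if y = (1:G) then (1:ℂ) else 0) = ∑ r, c r * Matrix.trace (π r y) := by
    intro y
    rw [← hδ' y, ← hsum]
    simp [Finset.sum_apply, hχ']
  -- compute the coefficients
  have hc : ∀ s : Fin k, (d s : ℂ) = c s * (Fintype.card G : ℂ) := by
    intro s
    have h3 := key c s
    have h4 : ∑ y : G, (∑ r, c r * Matrix.trace (π r y)) * Matrix.trace (π s y⁻¹)
        = ∑ y : G, (if y = (1:G) then (1:ℂ) else 0) * Matrix.trace (π s y⁻¹) := by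
      exact Finset.sum_congr rfl fun y _ => by rw [← hrep y]
    rw [h4] at h3
    rw [← h3]
    simp [Matrix.trace_one]
  -- conclude
  have := hrep x
  calc ∑ r, (d r : ℂ) * Matrix.trace (π r x)
      = ∑ r, (Fintype.card G : ℂ) * (c r * Matrix.trace (π r x)) := by
        refine Finset.sum_congr rfl fun r _ => ?_
        rw [hc r]; ring
    _ = (Fintype.card G : ℂ) * ∑ r, c r * Matrix.trace (π r x) := by rw [Finset.mul_sum]
    _ = (Fintype.card G : ℂ) * (if x = 1 then 1 else 0) := by rw [← this]
    _ = if x = 1 then (Fintype.card G : ℂ) else 0 := by split <;> simp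

lemma convchar (hdpos : ∀ r, 0 < d r)
    (hirr : ∀ (r : Fin k) (M : Matrix (Fin (d r)) (Fin (d r)) ℂ),
      (∀ x, M * π r x = π r x * M) → ∃ c : ℂ, M = c • (1 : Matrix (Fin (d r)) (Fin (d r)) ℂ))
    (hneq : ∀ (r s : Fin k), r ≠ s → ∀ T : Matrix (Fin (d r)) (Fin (d s)) ℂ,
      (∀ x, π r x * T = T * π s x) → T = 0)
    (r s : Fin k) (x : G) :
    conv (fun y => Matrix.trace (π r y)) (fun y => Matrix.trace (π s y)) x
      = (if r = s then ((d r : ℂ))⁻¹ else 0) * Matrix.trace (π s x) := by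
  have hG : (Fintype.card G : ℂ) ≠ 0 := by exact_mod_cast Fintype.card_ne_zero
  unfold conv
  have e1 : ∀ y : G, Matrix.trace (π r y) * Matrix.trace (π s (y⁻¹ * x))
      = ∑ j, ∑ l, (∑ i, (π r y) i i * (π s y⁻¹) j l) * (π s x) l j := by
    intro y
    rw [map_mul]
    simp only [Matrix.trace, Matrix.diag, Matrix.mul_apply]
    rw [Finset.mul_sum]
    refine Finset.sum_congr rfl fun j _ => ?_
    rw [Finset.mul_sum]
    refine Finset.sum_congr rfl fun l _ => ?_
    rw [← mul_assoc]
    congr 1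
    rw [Finset.sum_mul]
  rw [Finset.sum_congr rfl fun y (_ : y ∈ Finset.univ) => e1 y]
  rw [Finset.sum_comm]
  have e2 : ∀ j : Fin (d s), ∑ y : G, ∑ l, (∑ i, (π r y) i i * (π s y⁻¹) j l) * (π s x) l j
      = ∑ l, (∑ i, ∑ y : G, (π r y) i i * (π s y⁻¹) j l) * (π s x) l j := by
    intro j
    rw [Finset.sum_comm]
    refine Finset.sum_congr rfl fun l _ => ?_
    rw [← Finset.sum_mul]
    congr 1
    rw [Finset.sum_comm]
  rw [Finset.sum_congr rfl fun j (_ : j ∈ Finset.univ) => e2 j]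
  by_cases hrs : r = s
  · subst hrs
    rw [if_pos rfl]
    have e3 : ∀ (j l : Fin (d r)), (∑ i, ∑ y : G, (π r y) i i * (π r y⁻¹) j l)
        = (Fintype.card G : ℂ) / (d r : ℂ) * (if j = l then 1 else 0) := by
      intro j l
      have : ∀ i, ∑ y : G, (π r y) i i * (π r y⁻¹) j l
          = (Fintype.card G : ℂ) / (d r : ℂ)
            * ((if i = j then 1 else 0) * (if i = l then 1 else 0)) :=
        fun i => coef_eq hdpos hirr r i j i l
      rw [Finset.sum_congr rfl fun i _ => this i]
      rw [← Finset.mul_sum]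
      congr 1
      by_cases hjl : j = l
      · subst hjl; simp
      · rw [if_neg hjl]
        refine Finset.sum_eq_zero fun i _ => ?_
        by_cases hij : i = j
        · subst hij; simp [Ne.symm, hjl]
        · simp [hij]
    rw [Finset.sum_congr rfl fun j (_ : j ∈ Finset.univ) => Finset.sum_congr rfl
      fun l (_ : l ∈ Finset.univ) => by rw [e3 j l]]
    have hd : ((d r : ℂ)) ≠ 0 := by exact_mod_cast (hdpos r).ne'
    simp only [mul_ite, mul_one, mul_zero, ite_mul, zero_mul]
    rw [Finset.sum_congr rfl fun j (_ : j ∈ Finset.univ) => Finset.sum_ite_eq _ j _]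
    simp only [Finset.mem_univ, if_true]
    rw [← Finset.mul_sum]
    have : ∑ j, (π r x) j j = Matrix.trace (π r x) := rfl
    rw [this]
    field_simp
  · rw [if_neg hrs, zero_mul]
    have e4 : ∀ (j : Fin (d s)) (l : Fin (d s)), (∑ i, ∑ y : G, (π r y) i i * (π s y⁻¹) j l) = 0 :=
      fun j l => Finset.sum_eq_zero fun i _ => coef_ne hneq r s hrs i j i l
    rw [Finset.sum_congr rfl fun j (_ : j ∈ Finset.univ) => Finset.sum_congr rfl
      fun l (_ : l ∈ Finset.univ) => by rw [e4 j l, zero_mul]]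
    simp

lemma conv_scal_left (a : ℂ) (g f : G → ℂ) :
    conv (fun y => a * g y) f = fun x => a * conv g f x := by
  funext x
  simp only [conv, Finset.mul_sum]
  refine Finset.sum_congr rfl fun y _ => ?_
  ring

lemma conv_congr_left {g g' : G → ℂ} (h : ∀ y, g y = g' y) (f : G → ℂ) : conv g f = conv g' f := by
  funext x; simp only [conv]
  congr 1
  exact Finset.sum_congr rfl fun y _ => by rw [h y]

lemma conv_zero_left (f : G → ℂ) : conv (fun _ => (0:ℂ)) f = fun _ => 0 := by
  funext x; unfold conv; simp

lemma PP (hdpos : ∀ r, 0 < d r)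
    (hirr : ∀ (r : Fin k) (M : Matrix (Fin (d r)) (Fin (d r)) ℂ),
      (∀ x, M * π r x = π r x * M) → ∃ c : ℂ, M = c • (1 : Matrix (Fin (d r)) (Fin (d r)) ℂ))
    (hneq : ∀ (r s : Fin k), r ≠ s → ∀ T : Matrix (Fin (d r)) (Fin (d s)) ℂ,
      (∀ x, π r x * T = T * π s x) → T = 0)
    (r s : Fin k) :
    conv (fun y => (d r : ℂ) * Matrix.trace (π r y)) (fun y => (d s : ℂ) * Matrix.trace (π s y))
      = fun y => (if r = s then (1:ℂ) else 0) * ((d s : ℂ) * Matrix.trace (π s y)) := by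
  have hd : ((d r : ℂ)) ≠ 0 := by exact_mod_cast (hdpos r).ne'
  rw [conv_scal_left]
  funext x
  have h5 : conv (fun y => Matrix.trace (π r y)) (fun y => (d s : ℂ) * Matrix.trace (π s y)) x
      = (d s : ℂ) * conv (fun y => Matrix.trace (π r y)) (fun y => Matrix.trace (π s y)) x := by
    simp only [conv, Finset.mul_sum]
    refine Finset.sum_congr rfl fun y _ => ?_
    ring
  rw [h5, convchar hdpos hirr hneq r s x]
  by_cases hrs : r = s
  · subst hrs; rw [if_pos rfl, if_pos rfl]; field_simp
  · rw [if_neg hrs, if_neg hrs]; ring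

lemma selfadj_kernel (hunit : ∀ r x, π r x ∈ Matrix.unitaryGroup (Fin (d r)) ℂ) (r : Fin k) :
    ∀ y : G, (starRingEnd ℂ) ((d r : ℂ) * Matrix.trace (π r y⁻¹))
      = (d r : ℂ) * Matrix.trace (π r y) := by
  intro y
  rw [map_mul, conj_char hunit r y⁻¹, inv_inv]
  norm_num

lemma ipPP (hdpos : ∀ r, 0 < d r)
    (hunit : ∀ r x, π r x ∈ Matrix.unitaryGroup (Fin (d r)) ℂ)
    (hirr : ∀ (r : Fin k) (M : Matrix (Fin (d r)) (Fin (d r)) ℂ),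
      (∀ x, M * π r x = π r x * M) → ∃ c : ℂ, M = c • (1 : Matrix (Fin (d r)) (Fin (d r)) ℂ))
    (hneq : ∀ (r s : Fin k), r ≠ s → ∀ T : Matrix (Fin (d r)) (Fin (d s)) ℂ,
      (∀ x, π r x * T = T * π s x) → T = 0)
    (f : G → ℂ) (r s : Fin k) :
    ip (Pj π r f) (Pj π s f) = if r = s then ((nsq (Pj π r f) : ℝ) : ℂ) else 0 := by
  by_cases hrs : r = s
  · subst hrs; rw [if_pos rfl]; exact ip_self _
  · rw [if_neg hrs]
    unfold Pj
    rw [ip_conv, conv_congr_left (selfadj_kernel hunit r) _, conv_assoc, PP hdpos hirr hneq r s]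
    have : conv (fun y => (if r = s then (1:ℂ) else 0) * ((d s : ℂ) * Matrix.trace (π s y))) f
        = fun _ => 0 := by
      rw [if_neg hrs]
      have h0 : ∀ y : G, (0:ℂ) * ((d s : ℂ) * Matrix.trace (π s y)) = (fun _ => (0:ℂ)) y :=
        fun y => by ring
      rw [conv_congr_left h0 f, conv_zero_left]
    rw [this]
    unfold ip
    simp

lemma sumP [DecidableEq G] (hdpos : ∀ r, 0 < d r)
    (hirr : ∀ (r : Fin k) (M : Matrix (Fin (d r)) (Fin (d r)) ℂ),
      (∀ x, M * π r x = π r x * M) → ∃ c : ℂ, M = c • (1 : Matrix (Fin (d r)) (Fin (d r)) ℂ))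
    (hneq : ∀ (r s : Fin k), r ≠ s → ∀ T : Matrix (Fin (d r)) (Fin (d s)) ℂ,
      (∀ x, π r x * T = T * π s x) → T = 0)
    (hcard : Nat.card (ConjClasses G) = k)
    (f : G → ℂ) (x : G) : ∑ r, Pj π r f x = f x := by
  have hG : (Fintype.card G : ℂ) ≠ 0 := by exact_mod_cast Fintype.card_ne_zero
  simp only [Pj, conv]
  rw [← Finset.mul_sum, Finset.sum_comm]
  have h1 : ∀ y : G, ∑ r, (d r : ℂ) * Matrix.trace (π r y) * f (y⁻¹ * x)
      = (if y = 1 then (Fintype.card G : ℂ) else 0) * f (y⁻¹ * x) := by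
    intro y
    rw [← Finset.sum_mul, complete (π := π) hdpos hirr hneq hcard y]
  rw [Finset.sum_congr rfl fun y (_ : y ∈ Finset.univ) => h1 y]
  simp only [ite_mul, zero_mul]
  rw [Finset.sum_ite_eq' Finset.univ (1:G) (fun y => (Fintype.card G : ℂ) * f (y⁻¹ * x))]
  simp only [Finset.mem_univ, if_true, inv_one, one_mul]
  rw [← mul_assoc, inv_mul_cancel₀ hG, one_mul]

lemma conv_gwavelet (u : Fin k → ℂ) (f : G → ℂ) (x : G) :
    conv (gwavelet d π u) f x = ∑ r, u r * Pj π r f x := by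
  simp only [Pj, conv, gwavelet]
  have h1 : ∀ y : G, (∑ r, (d r : ℂ) * u r * Matrix.trace (π r y)) * f (y⁻¹ * x)
      = ∑ r, u r * ((d r : ℂ) * Matrix.trace (π r y) * f (y⁻¹ * x)) := by
    intro y
    rw [Finset.sum_mul]
    refine Finset.sum_congr rfl fun r _ => ?_
    ring
  rw [Finset.sum_congr rfl fun y (_ : y ∈ Finset.univ) => h1 y, Finset.sum_comm, Finset.mul_sum]
  refine Finset.sum_congr rfl fun r _ => ?_
  rw [← Finset.mul_sum]
  ring

lemma ip_expand (hdpos : ∀ r, 0 < d r)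
    (hunit : ∀ r x, π r x ∈ Matrix.unitaryGroup (Fin (d r)) ℂ)
    (hirr : ∀ (r : Fin k) (M : Matrix (Fin (d r)) (Fin (d r)) ℂ),
      (∀ x, M * π r x = π r x * M) → ∃ c : ℂ, M = c • (1 : Matrix (Fin (d r)) (Fin (d r)) ℂ))
    (hneq : ∀ (r s : Fin k), r ≠ s → ∀ T : Matrix (Fin (d r)) (Fin (d s)) ℂ,
      (∀ x, π r x * T = T * π s x) → T = 0)
    (u v : Fin k → ℂ) (f : G → ℂ) :
    ip (fun x => ∑ r, u r * Pj π r f x) (fun x => ∑ s, v s * Pj π s f x)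
      = ∑ r, (u r * (starRingEnd ℂ) (v r)) * ((nsq (Pj π r f) : ℝ) : ℂ) := by
  unfold ip
  have h1 : ∀ x : G, (∑ r, u r * Pj π r f x) * (starRingEnd ℂ) (∑ s, v s * Pj π s f x)
      = ∑ r, ∑ s, (u r * (starRingEnd ℂ) (v s))
          * (Pj π r f x * (starRingEnd ℂ) (Pj π s f x)) := by
    intro x
    rw [map_sum, Finset.sum_mul_sum]
    refine Finset.sum_congr rfl fun r _ => Finset.sum_congr rfl fun s _ => ?_
    rw [map_mul]
    ring
  have hG : (Fintype.card G : ℂ) ≠ 0 := by exact_mod_cast Fintype.card_ne_zero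
  rw [Finset.sum_congr rfl fun x (_ : x ∈ Finset.univ) => h1 x]
  have h2 : ∑ x : G, ∑ r, ∑ s, (u r * (starRingEnd ℂ) (v s))
        * (Pj π r f x * (starRingEnd ℂ) (Pj π s f x))
      = ∑ r, ∑ s, ∑ x : G, (u r * (starRingEnd ℂ) (v s))
        * (Pj π r f x * (starRingEnd ℂ) (Pj π s f x)) := by
    rw [Finset.sum_comm]
    exact Finset.sum_congr rfl fun r _ => Finset.sum_comm
  rw [h2]
  have h3 : ∀ (r s : Fin k), ∑ x : G, (u r * (starRingEnd ℂ) (v s))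
        * (Pj π r f x * (starRingEnd ℂ) (Pj π s f x))
      = (u r * (starRingEnd ℂ) (v s)) * ((Fintype.card G : ℂ) * ip (Pj π r f) (Pj π s f)) := by
    intro r s
    rw [← Finset.mul_sum]
    congr 1
    unfold ip
    rw [← mul_assoc, mul_inv_cancel₀ hG, one_mul]
  rw [Finset.sum_congr rfl fun r (_ : r ∈ Finset.univ) => Finset.sum_congr rfl
    fun s (_ : s ∈ Finset.univ) => by rw [h3 r s, ipPP hdpos hunit hirr hneq f r s]]
  have h4 : ∀ r : Fin k, ∑ s, (u r * (starRingEnd ℂ) (v s))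
        * ((Fintype.card G : ℂ) * (if r = s then ((nsq (Pj π r f) : ℝ) : ℂ) else 0))
      = (u r * (starRingEnd ℂ) (v r))
        * ((Fintype.card G : ℂ) * ((nsq (Pj π r f) : ℝ) : ℂ)) := by
    intro r
    rw [Finset.sum_eq_single r]
    · rw [if_pos rfl]
    · intro s _ hs
      rw [if_neg (Ne.symm hs), mul_zero, mul_zero]
    · intro h; exact absurd (Finset.mem_univ r) h
  rw [Finset.sum_congr rfl fun r (_ : r ∈ Finset.univ) => h4 r, Finset.mul_sum]
  refine Finset.sum_congr rfl fun r _ => ?_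
  calc (Fintype.card G : ℂ)⁻¹ * ((u r * (starRingEnd ℂ) (v r))
        * ((Fintype.card G : ℂ) * ((nsq (Pj π r f) : ℝ) : ℂ)))
      = ((Fintype.card G : ℂ)⁻¹ * (Fintype.card G : ℂ))
        * ((u r * (starRingEnd ℂ) (v r)) * ((nsq (Pj π r f) : ℝ) : ℂ)) := by ring
    _ = (u r * (starRingEnd ℂ) (v r)) * ((nsq (Pj π r f) : ℝ) : ℂ) := by
        rw [inv_mul_cancel₀ hG, one_mul]

lemma spectral (hdpos : ∀ r, 0 < d r)
    (hunit : ∀ r x, π r x ∈ Matrix.unitaryGroup (Fin (d r)) ℂ)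
    (hirr : ∀ (r : Fin k) (M : Matrix (Fin (d r)) (Fin (d r)) ℂ),
      (∀ x, M * π r x = π r x * M) → ∃ c : ℂ, M = c • (1 : Matrix (Fin (d r)) (Fin (d r)) ℂ))
    (hneq : ∀ (r s : Fin k), r ≠ s → ∀ T : Matrix (Fin (d r)) (Fin (d s)) ℂ,
      (∀ x, π r x * T = T * π s x) → T = 0)
    (u : Fin k → ℂ) (f : G → ℂ) :
    nsq (conv (gwavelet d π u) f) = ∑ r, Complex.normSq (u r) * nsq (Pj π r f) := by
  have h0 : conv (gwavelet d π u) f = fun x => ∑ r, u r * Pj π r f x :=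
    funext (conv_gwavelet u f)
  have h2 : ((nsq (conv (gwavelet d π u) f) : ℝ) : ℂ)
      = ((∑ r, Complex.normSq (u r) * nsq (Pj π r f) : ℝ) : ℂ) := by
    rw [← ip_self (conv (gwavelet d π u) f)]
    conv_lhs => rw [h0]
    rw [ip_expand hdpos hunit hirr hneq u u f]
    push_cast
    refine Finset.sum_congr rfl fun r _ => ?_
    rw [Complex.mul_conj]
  exact_mod_cast h2

lemma parseval [DecidableEq G] (hdpos : ∀ r, 0 < d r)
    (hunit : ∀ r x, π r x ∈ Matrix.unitaryGroup (Fin (d r)) ℂ)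
    (hirr : ∀ (r : Fin k) (M : Matrix (Fin (d r)) (Fin (d r)) ℂ),
      (∀ x, M * π r x = π r x * M) → ∃ c : ℂ, M = c • (1 : Matrix (Fin (d r)) (Fin (d r)) ℂ))
    (hneq : ∀ (r s : Fin k), r ≠ s → ∀ T : Matrix (Fin (d r)) (Fin (d s)) ℂ,
      (∀ x, π r x * T = T * π s x) → T = 0)
    (hcard : Nat.card (ConjClasses G) = k)
    (f : G → ℂ) :
    nsq f = ∑ r, nsq (Pj π r f) := by
  have h0 : f = fun x => ∑ r, (fun _ : Fin k => (1:ℂ)) r * Pj π r f x := by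
    funext x
    simp only [one_mul]
    exact (sumP hdpos hirr hneq hcard f x).symm
  have h2 : ((nsq f : ℝ) : ℂ) = ((∑ r, nsq (Pj π r f) : ℝ) : ℂ) := by
    rw [← ip_self f]
    conv_lhs => rw [h0]
    rw [ip_expand hdpos hunit hirr hneq _ _ f]
    push_cast
    simp
  exact_mod_cast h2

end rep

theorem stmt14 {G : Type*} [Group G] [Fintype G]
    {k : ℕ} (d : Fin k → ℕ) (hdpos : ∀ r, 0 < d r)
    (π : (r : Fin k) → G →* Matrix (Fin (d r)) (Fin (d r)) ℂ)
    (hunit : ∀ r x, π r x ∈ Matrix.unitaryGroup (Fin (d r)) ℂ)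
    (hirr : ∀ (r : Fin k) (M : Matrix (Fin (d r)) (Fin (d r)) ℂ),
      (∀ x, M * π r x = π r x * M) → ∃ c : ℂ, M = c • (1 : Matrix (Fin (d r)) (Fin (d r)) ℂ))
    (hneq : ∀ (r s : Fin k), r ≠ s → ∀ T : Matrix (Fin (d r)) (Fin (d s)) ℂ,
      (∀ x, π r x * T = T * π s x) → T = 0)
    (hcard : Nat.card (ConjClasses G) = k)
    {J : ℕ} (γ : Fin (J + 1) → Fin k → ℂ)
    (hPar : ∀ r : Fin k, ∑ j : Fin (J + 1), Complex.normSq (γ j r) = 1)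
    (β B : ℝ) (hβpos : 0 < β) (hβ : ∀ r : Fin k, β ≤ Complex.normSq (γ 0 r))
    (hB : ∀ r : Fin k, Complex.normSq (γ 0 r) ≤ B)
    (f : G → ℂ) (m : ℕ) :
    ∑ p : Fin (m + 1) → Fin J, nsq (Sop d π γ (List.ofFn p) f)
      ≤ B * (1 - β) ^ (m + 1) * nsq f := by
  classical
  -- k is positive
  have hk : 0 < k := by
    rw [← hcard]
    exact Nat.card_pos
  set r0 : Fin k := ⟨0, hk⟩ with hr0
  -- basic facts about β and B
  have hsum0 : Complex.normSq (γ 0 r0) ≤ 1 := by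
    have h := hPar r0
    rw [Fin.sum_univ_succ] at h
    have : 0 ≤ ∑ j : Fin J, Complex.normSq (γ j.succ r0) :=
      Finset.sum_nonneg fun j _ => Complex.normSq_nonneg _
    linarith
  have hβ1 : β ≤ 1 := le_trans (hβ r0) hsum0
  have h1β : 0 ≤ 1 - β := by linarith
  have hB0 : 0 ≤ B := le_trans (Complex.normSq_nonneg _) (hB r0)
  -- the layer bound
  have layer : ∀ g : G → ℂ,
      ∑ j : Fin J, nsq (conv (gwavelet d π (γ j.succ)) g) ≤ (1 - β) * nsq g := by
    intro g
    have e1 : ∀ j : Fin J, nsq (conv (gwavelet d π (γ j.succ)) g)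
        = ∑ r, Complex.normSq (γ j.succ r) * nsq (Pj π r g) :=
      fun j => spectral hdpos hunit hirr hneq (γ j.succ) g
    calc ∑ j : Fin J, nsq (conv (gwavelet d π (γ j.succ)) g)
        = ∑ j : Fin J, ∑ r, Complex.normSq (γ j.succ r) * nsq (Pj π r g) :=
          Finset.sum_congr rfl fun j _ => e1 j
      _ = ∑ r, (∑ j : Fin J, Complex.normSq (γ j.succ r)) * nsq (Pj π r g) := by
          rw [Finset.sum_comm]
          exact Finset.sum_congr rfl fun r _ => (Finset.sum_mul _ _ _).symm
      _ = ∑ r, (1 - Complex.normSq (γ 0 r)) * nsq (Pj π r g) := by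
          refine Finset.sum_congr rfl fun r _ => ?_
          have h := hPar r
          rw [Fin.sum_univ_succ] at h
          have : ∑ j : Fin J, Complex.normSq (γ j.succ r) = 1 - Complex.normSq (γ 0 r) := by
            linarith
          rw [this]
      _ ≤ ∑ r, (1 - β) * nsq (Pj π r g) := by
          refine Finset.sum_le_sum fun r _ => ?_
          have := hβ r
          exact mul_le_mul_of_nonneg_right (by linarith) (nsq_nonneg _)
      _ = (1 - β) * nsq g := by
          rw [← Finset.mul_sum, ← parseval hdpos hunit hirr hneq hcard g]
  -- the output bound
  have top : ∀ g : G → ℂ, nsq (conv (gwavelet d π (γ 0)) g) ≤ B * nsq g := by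
    intro g
    rw [spectral hdpos hunit hirr hneq (γ 0) g]
    calc ∑ r, Complex.normSq (γ 0 r) * nsq (Pj π r g)
        ≤ ∑ r, B * nsq (Pj π r g) :=
          Finset.sum_le_sum fun r _ => mul_le_mul_of_nonneg_right (hB r) (nsq_nonneg _)
      _ = B * nsq g := by rw [← Finset.mul_sum, ← parseval hdpos hunit hirr hneq hcard g]
  -- the path bound by induction
  have upath : ∀ (n : ℕ) (g : G → ℂ),
      ∑ p : Fin (n + 1) → Fin J,
          nsq (Upath (fun j => gwavelet d π (γ j.succ)) (List.ofFn p) g)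
        ≤ (1 - β) ^ (n + 1) * nsq g := by
    intro n
    induction n with
    | zero =>
      intro g
      rw [← Equiv.sum_comp (Equiv.funUnique (Fin 1) (Fin J)).symm
        (fun p => nsq (Upath (fun j => gwavelet d π (γ j.succ)) (List.ofFn p) g))]
      have e1 : ∀ j : Fin J,
          nsq (Upath (fun j => gwavelet d π (γ j.succ))
            (List.ofFn ((Equiv.funUnique (Fin 1) (Fin J)).symm j)) g)
          = nsq (conv (gwavelet d π (γ j.succ)) g) := by
        intro j
        have hl : List.ofFn ((Equiv.funUnique (Fin 1) (Fin J)).symm j) = [j] := by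
          simp [List.ofFn_succ]
        rw [hl]
        show nsq (fun x => ((‖conv (gwavelet d π (γ j.succ)) g x‖ : ℝ) : ℂ))
          = nsq (conv (gwavelet d π (γ j.succ)) g)
        exact nsq_abs _
      rw [Finset.sum_congr rfl fun j (_ : j ∈ Finset.univ) => e1 j, pow_one]
      exact layer g
    | succ n ih =>
      intro g
      rw [← Equiv.sum_comp (Fin.consEquiv (fun _ : Fin (n+2) => Fin J))
        (fun p => nsq (Upath (fun j => gwavelet d π (γ j.succ)) (List.ofFn p) g))]
      rw [Fintype.sum_prod_type]
      have e2 : ∀ (j : Fin J) (q : Fin (n+1) → Fin J),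
          nsq (Upath (fun j => gwavelet d π (γ j.succ))
            (List.ofFn ((Fin.consEquiv (fun _ : Fin (n+2) => Fin J)) (j, q))) g)
          = nsq (Upath (fun j => gwavelet d π (γ j.succ)) (List.ofFn q)
              (fun x => ((‖conv (gwavelet d π (γ j.succ)) g x‖ : ℝ) : ℂ))) := by
        intro j q
        have hl : List.ofFn ((Fin.consEquiv (fun _ : Fin (n+2) => Fin J)) (j, q))
            = j :: List.ofFn q := by
          rw [List.ofFn_succ]
          congr 1
        rw [hl]
        rfl
      calc ∑ j : Fin J, ∑ q : Fin (n+1) → Fin J,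
            nsq (Upath (fun j => gwavelet d π (γ j.succ))
              (List.ofFn ((Fin.consEquiv (fun _ : Fin (n+2) => Fin J)) (j, q))) g)
          = ∑ j : Fin J, ∑ q : Fin (n+1) → Fin J,
              nsq (Upath (fun j => gwavelet d π (γ j.succ)) (List.ofFn q)
                (fun x => ((‖conv (gwavelet d π (γ j.succ)) g x‖ : ℝ) : ℂ))) :=
            Finset.sum_congr rfl fun j _ => Finset.sum_congr rfl fun q _ => e2 j q
        _ ≤ ∑ j : Fin J, (1 - β) ^ (n + 1)
              * nsq (fun x => ((‖conv (gwavelet d π (γ j.succ)) g x‖ : ℝ) : ℂ)) :=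
            Finset.sum_le_sum fun j _ => ih _
        _ = (1 - β) ^ (n + 1) * ∑ j : Fin J, nsq (conv (gwavelet d π (γ j.succ)) g) := by
            rw [Finset.mul_sum]
            exact Finset.sum_congr rfl fun j _ => by rw [nsq_abs]
        _ ≤ (1 - β) ^ (n + 1) * ((1 - β) * nsq g) :=
            mul_le_mul_of_nonneg_left (layer g) (pow_nonneg h1β _)
        _ = (1 - β) ^ (n + 2) * nsq g := by ring
  -- final assembly
  calc ∑ p : Fin (m + 1) → Fin J, nsq (Sop d π γ (List.ofFn p) f)
      ≤ ∑ p : Fin (m + 1) → Fin J,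
          B * nsq (Upath (fun j => gwavelet d π (γ j.succ)) (List.ofFn p) f) :=
        Finset.sum_le_sum fun p _ => top _
    _ = B * ∑ p : Fin (m + 1) → Fin J,
          nsq (Upath (fun j => gwavelet d π (γ j.succ)) (List.ofFn p) f) := by
        rw [Finset.mul_sum]
    _ ≤ B * ((1 - β) ^ (m + 1) * nsq f) :=
        mul_le_mul_of_nonneg_left (upath m f) hB0
    _ = B * (1 - β) ^ (m + 1) * nsq f := by ring
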